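/- Let λ ≥ 0 and let α̂_K(λ) be the unique minimizer of α ↦ l_OLS(α) + λ·l_IV(α). Set t(λ) := l_IV(α̂_K(λ)) and assume t(λ) > inf_α l_IV(α). Then α̂_K(λ) is the unique solution of the constrained problem: minimize l_OLS(α) subject to l_IV(α) ≤ t(λ), and strong duality holds between this primal problem and its Lagrangian dual. -/

import Mathlib

open Matrix

lemma dot_self_nonneg' {n : ℕ} (v : Fin n → ℝ) : 0 ≤ v ⬝ᵥ v :=
  Finset.sum_nonneg fun i _ => mul_self_nonneg (v i)

lemma dot_parallelogram {n : ℕ} (u v : Fin n → ℝ) :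
    (u + v) ⬝ᵥ (u + v) + (u - v) ⬝ᵥ (u - v) = 2 * (u ⬝ᵥ u) + 2 * (v ⬝ᵥ v) := by
  simp only [dotProduct, Pi.add_apply, Pi.sub_apply, Finset.mul_sum]
  rw [← Finset.sum_add_distrib, ← Finset.sum_add_distrib]
  exact Finset.sum_congr rfl fun i _ => by ring


/-- Connecting the dual and the primal: if `α̂_K` minimizes `l_OLS + λ·l_IV` and
`t := l_IV(α̂_K) > inf l_IV`, then `α̂_K` is the unique solution of
"minimize `l_OLS` subject to `l_IV ≤ t`", and strong duality holds (the
Lagrangian dual value is attained and equals the primal optimal value). -/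
theorem kclass_solves_primal_strong_duality {n k : ℕ} (Z : Matrix (Fin n) (Fin k) ℝ)
    (Y : Fin n → ℝ) (PA : Matrix (Fin n) (Fin n) ℝ)
    (hPsymm : PAᵀ = PA) (hPidem : PA * PA = PA)
    (hZ : (Zᵀ * Z).PosDef)
    (lOLS lIV : (Fin k → ℝ) → ℝ)
    (hOLS : ∀ α, lOLS α = (Y - Z.mulVec α) ⬝ᵥ (Y - Z.mulVec α))
    (hIV : ∀ α, lIV α = (PA.mulVec (Y - Z.mulVec α)) ⬝ᵥ (PA.mulVec (Y - Z.mulVec α)))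
    (lam : ℝ) (hlam : 0 ≤ lam) (αK : Fin k → ℝ)
    (hKmin : ∀ α, lOLS αK + lam * lIV αK ≤ lOLS α + lam * lIV α)
    (ht : sInf (Set.range lIV) < lIV αK) :
    (∀ α, lIV α ≤ lIV αK → lOLS αK ≤ lOLS α) ∧
      (∀ α, lIV α ≤ lIV αK → lOLS α ≤ lOLS αK → α = αK) ∧
      (∀ γ : ℝ, 0 ≤ γ →
        sInf (Set.range fun α => lOLS α + γ * (lIV α - lIV αK)) ≤ lOLS αK) ∧
      (∃ γ : ℝ, 0 ≤ γ ∧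
        sInf (Set.range fun α => lOLS α + γ * (lIV α - lIV αK)) = lOLS αK) := by
  have hOLSnn : ∀ α, 0 ≤ lOLS α := fun α => (hOLS α) ▸ dot_self_nonneg' _
  have hIVnn : ∀ α, 0 ≤ lIV α := fun α => (hIV α) ▸ dot_self_nonneg' _
  refine ⟨?_, ?_, ?_, ?_⟩
  · intro α hle
    have := hKmin α
    have h2 : lam * lIV α ≤ lam * lIV αK := mul_le_mul_of_nonneg_left hle hlam
    linarith
  · -- uniqueness via strict convexity
    intro α hle hge
    by_contra hne
    set m : Fin k → ℝ := (1/2 : ℝ) • (α + αK) with hm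
    set u : Fin n → ℝ := Y - Z.mulVec α with hu
    set v : Fin n → ℝ := Y - Z.mulVec αK with hv
    have hmid : Y - Z.mulVec m = (1/2 : ℝ) • (u + v) := by
      rw [hm, Matrix.mulVec_smul, Matrix.mulVec_add, hu, hv]
      module
    have hdiff : u - v = Z.mulVec (αK - α) := by
      rw [Matrix.mulVec_sub, hu, hv]; module
    -- strict positivity of the OLS gap
    have hx : αK - α ≠ 0 := sub_ne_zero.mpr (Ne.symm hne)
    have hpos0 := hZ.dotProduct_mulVec_pos hx
    have hid : (αK - α) ⬝ᵥ ((Zᵀ * Z) *ᵥ (αK - α)) =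
        (Z *ᵥ (αK - α)) ⬝ᵥ (Z *ᵥ (αK - α)) := by
      rw [← Matrix.mulVec_mulVec, Matrix.dotProduct_mulVec, Matrix.vecMul_transpose]
    have hpos : 0 < (u - v) ⬝ᵥ (u - v) := by
      rw [hdiff, ← hid]
      simpa using hpos0
    -- lOLS at midpoint
    have hOLSm : lOLS m = (lOLS α + lOLS αK) / 2 - (1/4) * ((u - v) ⬝ᵥ (u - v)) := by
      rw [hOLS m, hmid, hOLS α, hOLS αK, ← hu, ← hv, smul_dotProduct, dotProduct_smul,
        smul_eq_mul, smul_eq_mul]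
      have := dot_parallelogram u v
      linarith
    -- lIV at midpoint (convexity)
    have hIVm : lIV m ≤ (lIV α + lIV αK) / 2 := by
      rw [hIV m, hmid, hIV α, hIV αK, ← hu, ← hv, Matrix.mulVec_smul, Matrix.mulVec_add,
        smul_dotProduct, dotProduct_smul, smul_eq_mul, smul_eq_mul]
      have h1 := dot_parallelogram (PA *ᵥ u) (PA *ᵥ v)
      have h2 := dot_self_nonneg' (PA *ᵥ u - PA *ᵥ v)
      linarith
    have hIVm' : lam * lIV m ≤ (lam * lIV α + lam * lIV αK) / 2 := by nlinarith
    have hlam2 : lam * lIV α ≤ lam * lIV αK := mul_le_mul_of_nonneg_left hle hlam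
    have := hKmin m
    linarith
  · intro γ hγ
    have hbdd : BddBelow (Set.range fun α => lOLS α + γ * (lIV α - lIV αK)) := by
      refine ⟨-(γ * lIV αK), ?_⟩
      rintro x ⟨α, rfl⟩
      show -(γ * lIV αK) ≤ lOLS α + γ * (lIV α - lIV αK)
      have h1 := hOLSnn α
      have h2 : 0 ≤ γ * lIV α := mul_nonneg hγ (hIVnn α)
      nlinarith
    have := csInf_le hbdd ⟨αK, rfl⟩
    simpa using this
  · refine ⟨lam, hlam, le_antisymm ?_ ?_⟩
    · have hbdd : BddBelow (Set.range fun α => lOLS α + lam * (lIV α - lIV αK)) := by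
        refine ⟨lOLS αK, ?_⟩
        rintro x ⟨α, rfl⟩
        show lOLS αK ≤ lOLS α + lam * (lIV α - lIV αK)
        have := hKmin α
        nlinarith
      have := csInf_le hbdd ⟨αK, rfl⟩
      simpa using this
    · refine le_csInf ⟨_, ⟨αK, rfl⟩⟩ ?_
      rintro x ⟨α, rfl⟩
      show lOLS αK ≤ lOLS α + lam * (lIV α - lIV αK)
      have := hKmin α
      nlinarith
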